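/- arXiv:0911.4644 — 2 statements merged into one kernel-verified Lean document; each statement's English description precedes it below -/
import Mathlib

section
/- Let k be a field, f and g forms of degree d over k in n+1 variables, and L/k a finite field extension such that the variety X: f = g = 0 in ℙⁿ has an L-point. Then the hypersurface f + t·g = 0 in ℙⁿ over K = k(t) has an L(t)-point. Consequently I(W/K) divides I(X/k). -/
universe u

set_option maxHeartbeats 1000000
set_option synthInstance.maxHeartbeats 1000000

noncomputable section

/-- The projective variety cut out by the set `S` of forms has a nontrivial point over the
field extension `L` of `k`. -/
def ProjHasPointOver (k : Type u) [Field k] (L : Type u) [Field L] [Algebra k L] {N : ℕ}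
    (S : Set (MvPolynomial (Fin N) k)) : Prop :=
  ∃ x : Fin N → L, x ≠ 0 ∧
    ∀ f ∈ S, MvPolynomial.eval x (MvPolynomial.map (algebraMap k L) f) = 0

/-- The set of degrees `[L:k]` of finite field extensions `L/k` over which the projective
variety cut out by `S` acquires a point. -/
def projDegrees (k : Type u) [Field k] {N : ℕ} (S : Set (MvPolynomial (Fin N) k)) : Set ℕ :=
  {m | ∃ (L : Type u) (_ : Field L) (_ : Algebra k L), FiniteDimensional k L ∧
        Module.finrank k L = m ∧ ProjHasPointOver k L S}

/-- `IsGcdOf S g` expresses that `g` is the greatest common divisor of the set `S ⊆ ℕ`. -/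
def IsGcdOf (S : Set ℕ) (g : ℕ) : Prop :=
  (∀ m ∈ S, g ∣ m) ∧ ∀ J : ℕ, (∀ m ∈ S, J ∣ m) → J ∣ g

/-- The index of the projective variety cut out by `S` over `k`: the gcd of the degrees of the
closed points, i.e. the gcd of the degrees of the finite extensions over which it has a point. -/
def projIndex (k : Type u) [Field k] {N : ℕ} (S : Set (MvPolynomial (Fin N) k)) : ℕ :=
  sInf {g | IsGcdOf (projDegrees k S) g}

/-- The projective variety cut out by `S` possesses a zero-cycle of degree 1 over `k`. -/
def HasZeroCycleDegOne (k : Type u) [Field k] {N : ℕ}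
    (S : Set (MvPolynomial (Fin N) k)) : Prop :=
  ∃ (m : ℕ) (dg : Fin m → ℕ) (c : Fin m → ℤ),
    (∀ i, dg i ∈ projDegrees k S) ∧ ∑ i, c i * (dg i : ℤ) = 1

/-- The reduced index: the product of the distinct primes dividing the index. -/
def Nat.radicalOf (I : ℕ) : ℕ := I.primeFactors.prod id

/-- The natural inclusion `k(t) → L(t)` induced by a field extension `L/k`. -/
def ratFuncMap (k L : Type u) [Field k] [Field L] [Algebra k L] : RatFunc k →+* RatFunc L :=
  RatFunc.mapRingHom (Polynomial.mapRingHom (algebraMap k L)) (by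
    intro p hp
    simp only [Submonoid.mem_comap, Polynomial.coe_mapRingHom] at *
    rw [mem_nonZeroDivisors_iff_ne_zero] at hp ⊢
    simpa [Polynomial.map_ne_zero_iff ((algebraMap k L).injective)] using hp)

section Aux

variable (k L : Type u) [Field k] [Field L] [Algebra k L]

lemma ratFuncMap_algebraMap (p : Polynomial k) :
    ratFuncMap k L (algebraMap (Polynomial k) (RatFunc k) p) =
      algebraMap (Polynomial L) (RatFunc L) (p.map (algebraMap k L)) := by
  have h1 : algebraMap (Polynomial k) (RatFunc k) p =
      algebraMap _ _ p / algebraMap _ _ (1 : Polynomial k) := by simp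
  rw [ratFuncMap, RatFunc.coe_mapRingHom_eq_coe_map, h1, RatFunc.map_apply_div]
  simp

lemma ratFuncMap_comp :
    (ratFuncMap k L).comp (algebraMap k (RatFunc k)) =
      (algebraMap L (RatFunc L)).comp (algebraMap k L) := by
  ext c
  simp only [RingHom.comp_apply]
  rw [IsScalarTower.algebraMap_apply k (Polynomial k) (RatFunc k),
    ratFuncMap_algebraMap, IsScalarTower.algebraMap_apply L (Polynomial L) (RatFunc L)]
  simp [Polynomial.map_C, ← IsScalarTower.algebraMap_apply]

lemma ratFuncMap_X : ratFuncMap k L RatFunc.X = RatFunc.X := by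
  rw [← RatFunc.algebraMap_X (K := k), ratFuncMap_algebraMap]
  simp [RatFunc.algebraMap_X]

lemma exists_ratFunc_basis {m : ℕ} (b : Module.Basis (Fin m) k L) :
    letI : Algebra (RatFunc k) (RatFunc L) := (ratFuncMap k L).toAlgebra
    Nonempty (Module.Basis (Fin m) (RatFunc k) (RatFunc L)) := by
  letI : Algebra (RatFunc k) (RatFunc L) := (ratFuncMap k L).toAlgebra
  have halg : algebraMap (RatFunc k) (RatFunc L) = ratFuncMap k L := rfl
  set K := RatFunc k
  set algL := algebraMap L (RatFunc L) with halgL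
  have hcomm : ∀ c : k, ratFuncMap k L (algebraMap k K c) = algL (algebraMap k L c) := by
    intro c; exact RingHom.congr_fun (ratFuncMap_comp k L) c
  set v : Fin m → RatFunc L := fun i => algL (b i) with hv
  set V : Submodule K (RatFunc L) := Submodule.span K (Set.range v) with hV
  -- step 1 : constants
  have hconst : ∀ a : L, algL a ∈ V := by
    intro a
    have h1 : a = ∑ i, b.repr a i • b i := (b.sum_repr a).symm
    rw [h1, map_sum]
    refine Submodule.sum_mem _ fun i _ => ?_
    have h2 : algL (b.repr a i • b i) = (algebraMap k K (b.repr a i)) • v i := by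
      rw [Algebra.smul_def, map_mul, Algebra.smul_def, halg, hcomm]
    rw [h2]
    exact Submodule.smul_mem _ _ (Submodule.subset_span ⟨i, rfl⟩)
  have hCa : ∀ a : L, algebraMap (Polynomial L) (RatFunc L) (Polynomial.C a) = algL a := by
    intro a
    rw [halgL, IsScalarTower.algebraMap_apply L (Polynomial L) (RatFunc L),
      Polynomial.algebraMap_eq]
  -- step 2 : multiplicative closure
  have hmul : ∀ x ∈ V, ∀ y ∈ V, x * y ∈ V := by
    intro x hx
    induction hx using Submodule.span_induction with
    | mem x hx =>
      intro y hy
      induction hy using Submodule.span_induction with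
      | mem y hy =>
        obtain ⟨i, rfl⟩ := hx
        obtain ⟨j, rfl⟩ := hy
        have : v i * v j = algL (b i * b j) := by rw [map_mul]
        rw [this]
        exact hconst _
      | zero => simpa using Submodule.zero_mem V
      | add y z _ _ hy hz => rw [mul_add]; exact Submodule.add_mem _ hy hz
      | smul c y _ hy => rw [mul_smul_comm]; exact Submodule.smul_mem _ _ hy
    | zero => intro y hy; simpa using Submodule.zero_mem V
    | add x z _ _ hx hz => intro y hy; rw [add_mul]; exact Submodule.add_mem _ (hx y hy) (hz y hy)
    | smul c x _ hx => intro y hy; rw [smul_mul_assoc]; exact Submodule.smul_mem _ _ (hx y hy)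
  have hone : (1 : RatFunc L) ∈ V := by simpa using hconst 1
  -- step 4 : polynomials
  have hpoly : ∀ p : Polynomial L, algebraMap (Polynomial L) (RatFunc L) p ∈ V := by
    intro p
    induction p using Polynomial.induction_on' with
    | add p q hp hq => rw [map_add]; exact Submodule.add_mem _ hp hq
    | monomial n a =>
      rw [← Polynomial.C_mul_X_pow_eq_monomial, map_mul, map_pow]
      have hC := hCa a
      have hX : algebraMap (Polynomial L) (RatFunc L) Polynomial.X = ratFuncMap k L RatFunc.X := by
        rw [RatFunc.algebraMap_X, ratFuncMap_X]
      rw [hC, hX, ← map_pow, mul_comm, ← halg, ← Algebra.smul_def]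
      exact Submodule.smul_mem _ _ (hconst a)
  -- step 5 : inverses
  haveI : FiniteDimensional K V := FiniteDimensional.span_of_finite _ (Set.finite_range v)
  have hinv : ∀ q : RatFunc L, q ∈ V → q ≠ 0 → ∃ y ∈ V, q * y = 1 := by
    intro q hq hq0
    let f : V →ₗ[K] V :=
      { toFun := fun y => ⟨q * y.1, hmul q hq y.1 y.2⟩
        map_add' := fun y z => Subtype.ext (mul_add q y.1 z.1)
        map_smul' := fun c y => Subtype.ext (mul_smul_comm c q y.1) }
    have hinj : Function.Injective f := by
      intro y z hyz
      have h1 : q * (y : RatFunc L) = q * (z : RatFunc L) := congrArg Subtype.val hyz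
      exact Subtype.ext (mul_left_cancel₀ hq0 h1)
    obtain ⟨y, hy⟩ := (LinearMap.injective_iff_surjective (f := f)).mp hinj ⟨1, hone⟩
    exact ⟨y.1, y.2, congrArg Subtype.val hy⟩
  -- step 6 : spanning
  have htop : ⊤ ≤ V := by
    intro z _
    have hz : algebraMap _ (RatFunc L) z.num / algebraMap _ _ z.denom = z := z.num_div_denom
    have hd0 : algebraMap (Polynomial L) (RatFunc L) z.denom ≠ 0 :=
      RatFunc.algebraMap_ne_zero z.denom_ne_zero
    obtain ⟨y, hyV, hy1⟩ := hinv _ (hpoly z.denom) hd0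
    have hzz : z * algebraMap (Polynomial L) (RatFunc L) z.denom
        = algebraMap (Polynomial L) (RatFunc L) z.num := by
      have h6 := div_mul_cancel₀ (algebraMap (Polynomial L) (RatFunc L) z.num) hd0
      rw [hz] at h6
      exact h6
    have : z = algebraMap (Polynomial L) (RatFunc L) z.num * y := by
      calc z = z * (algebraMap (Polynomial L) (RatFunc L) z.denom * y) := by rw [hy1, mul_one]
        _ = z * algebraMap (Polynomial L) (RatFunc L) z.denom * y := by ring
        _ = _ := by rw [hzz]
    rw [this]
    exact hmul _ (hpoly z.num) y hyV
  -- step 7 : linear independence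
  have hli : LinearIndependent K v := by
    rw [Fintype.linearIndependent_iff]
    intro c hc
    obtain ⟨s, hs⟩ := IsLocalization.exist_integer_multiples (nonZeroDivisors (Polynomial k))
      Finset.univ c
    choose p hp using fun i => hs i (Finset.mem_univ i)
    set P : Polynomial L := ∑ i, ((p i).map (algebraMap k L)) * Polynomial.C (b i) with hP
    have hPzero : algebraMap (Polynomial L) (RatFunc L) P = 0 := by
      rw [hP, map_sum]
      have : ∀ i, algebraMap (Polynomial L) (RatFunc L)
            ((p i).map (algebraMap k L) * Polynomial.C (b i))
          = (algebraMap (Polynomial k) K (s : Polynomial k)) • (c i • v i) := by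
        intro i
        rw [map_mul]
        have h1 : algebraMap (Polynomial L) (RatFunc L) ((p i).map (algebraMap k L))
            = ratFuncMap k L (algebraMap (Polynomial k) K (p i)) := by
          rw [ratFuncMap_algebraMap]
        have h2 : algebraMap (Polynomial L) (RatFunc L) (Polynomial.C (b i)) = v i := hCa (b i)
        rw [h1, h2, hp i]
        rw [Algebra.smul_def (A := K), map_mul, Algebra.smul_def, Algebra.smul_def, halg, mul_assoc]
      rw [Finset.sum_congr rfl fun i _ => this i, ← Finset.smul_sum, hc, smul_zero]
    have hP0 : P = 0 := by
      have := RatFunc.algebraMap_injective (K := L)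
      apply this
      simpa using hPzero
    have hpz : ∀ i, p i = 0 := by
      intro i
      ext j
      have hcoeff := congrArg (fun q => Polynomial.coeff q j) hP0
      simp only [hP, Polynomial.finset_sum_coeff, Polynomial.coeff_mul_C,
        Polynomial.coeff_map, Polynomial.coeff_zero] at hcoeff
      have : ∀ i', algebraMap k L ((p i').coeff j) * b i' = ((p i').coeff j) • b i' := by
        intro i'; rw [Algebra.smul_def]
      rw [Finset.sum_congr rfl fun i' _ => this i'] at hcoeff
      have := Fintype.linearIndependent_iff.mp b.linearIndependent _ hcoeff i
      simpa using this
    intro i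
    have h4 := hp i
    rw [hpz i, map_zero, Algebra.smul_def] at h4
    have hs0 : algebraMap (Polynomial k) K (s : Polynomial k) ≠ 0 :=
      RatFunc.algebraMap_ne_zero (nonZeroDivisors.ne_zero s.2)
    exact (mul_eq_zero.mp h4.symm).resolve_left hs0
  exact ⟨Module.Basis.mk hli htop⟩

lemma point_transfer {N : ℕ} (f g : MvPolynomial (Fin N) k)
    (hpt : ProjHasPointOver k L {f, g}) :
    @ProjHasPointOver (RatFunc k) _ (RatFunc L) _ ((ratFuncMap k L).toAlgebra) _
      ({MvPolynomial.map (algebraMap k (RatFunc k)) f +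
        MvPolynomial.C RatFunc.X * MvPolynomial.map (algebraMap k (RatFunc k)) g} :
        Set (MvPolynomial (Fin N) (RatFunc k))) := by
  letI : Algebra (RatFunc k) (RatFunc L) := (ratFuncMap k L).toAlgebra
  obtain ⟨x, hx0, hx⟩ := hpt
  have key : ∀ F : MvPolynomial (Fin N) k,
      MvPolynomial.eval x (MvPolynomial.map (algebraMap k L) F) = 0 →
      MvPolynomial.eval (fun i => algebraMap L (RatFunc L) (x i))
        (MvPolynomial.map (algebraMap (RatFunc k) (RatFunc L))
          (MvPolynomial.map (algebraMap k (RatFunc k)) F)) = 0 := by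
    intro F hF
    have halg : algebraMap (RatFunc k) (RatFunc L) = ratFuncMap k L := rfl
    rw [halg, MvPolynomial.map_map, ratFuncMap_comp, ← MvPolynomial.map_map,
      MvPolynomial.eval_map]
    have h := MvPolynomial.eval₂_comp_left (algebraMap L (RatFunc L)) (RingHom.id L) x
      (MvPolynomial.map (algebraMap k L) F)
    simp only [RingHom.comp_id, MvPolynomial.eval₂_id] at h
    rw [show (fun i => algebraMap L (RatFunc L) (x i)) = (algebraMap L (RatFunc L)) ∘ x from rfl,
      ← h, hF, map_zero]
  refine ⟨fun i => algebraMap L (RatFunc L) (x i), ?_, ?_⟩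
  · intro h
    apply hx0
    funext i
    have h1 : algebraMap L (RatFunc L) (x i) = 0 := congrFun h i
    exact (map_eq_zero _).mp h1
  · intro F hF
    rw [Set.mem_singleton_iff] at hF
    subst hF
    rw [map_add, map_mul, map_add (MvPolynomial.eval _), MvPolynomial.map_C,
      map_mul (MvPolynomial.eval _), MvPolynomial.eval_C,
      key f (hx f (Set.mem_insert f {g})), key g (hx g (Set.mem_insert_iff.mpr (Or.inr rfl)))]
    ring

end Aux

lemma degrees_transfer (k : Type u) [Field k] {N : ℕ} (f g : MvPolynomial (Fin N) k)
    (m : ℕ) (hm : m ∈ projDegrees k {f, g}) :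
    m ∈ projDegrees (RatFunc k)
      ({MvPolynomial.map (algebraMap k (RatFunc k)) f +
        MvPolynomial.C RatFunc.X * MvPolynomial.map (algebraMap k (RatFunc k)) g} :
        Set (MvPolynomial (Fin N) (RatFunc k))) := by
  obtain ⟨L, _, _, hfd, hrk, hpt⟩ := hm
  letI : Algebra (RatFunc k) (RatFunc L) := (ratFuncMap k L).toAlgebra
  obtain ⟨B⟩ := exists_ratFunc_basis k L (Module.finBasis k L)
  refine ⟨RatFunc L, inferInstance, (ratFuncMap k L).toAlgebra,
    Module.Basis.finiteDimensional_of_finite B, ?_, point_transfer k L f g hpt⟩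
  rw [Module.finrank_eq_card_basis B, Fintype.card_fin, hrk]

lemma exists_isGcdOf (D : Set ℕ) : ∃ G, IsGcdOf D G := by
  by_cases h0 : ∀ m ∈ D, m = 0
  · exact ⟨0, fun m hm => by rw [h0 m hm], fun J _ => dvd_zero J⟩
  · push_neg at h0
    obtain ⟨m₀, hm₀D, hm₀⟩ := h0
    set T : Set ℕ := {n : ℕ | n ≠ 0 ∧ ∃ F : Finset ℕ, ↑F ⊆ D ∧ F.gcd id = n} with hT
    have hm₀T : m₀ ∈ T := ⟨hm₀, {m₀}, by simpa using hm₀D, by simp⟩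
    set G := sInf T with hG
    have hGT : G ∈ T := Nat.sInf_mem ⟨m₀, hm₀T⟩
    obtain ⟨hG0, F, hFD, hFg⟩ := hGT
    refine ⟨G, fun m hm => ?_, fun J hJ => ?_⟩
    · have hmem : Nat.gcd m G ∈ T := by
        refine ⟨Nat.gcd_ne_zero_right hG0, insert m F, ?_, ?_⟩
        · intro n hn
          rcases Finset.mem_insert.mp (by exact_mod_cast hn) with h | h
          · exact h ▸ hm
          · exact hFD h
        · rw [Finset.gcd_insert, hFg]
          simp only [id_eq]
          rfl
      have h1 : G ≤ Nat.gcd m G := Nat.sInf_le hmem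
      have h2 : Nat.gcd m G ≤ G := Nat.le_of_dvd (Nat.pos_of_ne_zero hG0) (Nat.gcd_dvd_right m G)
      have h3 : Nat.gcd m G = G := le_antisymm h2 h1
      exact h3 ▸ Nat.gcd_dvd_left m G
    · rw [← hFg]
      exact Finset.dvd_gcd fun n hn => hJ n (hFD hn)

lemma isGcdOf_sInf (D : Set ℕ) : IsGcdOf D (sInf {g | IsGcdOf D g}) := by
  obtain ⟨G, hG⟩ := exists_isGcdOf D
  have hs : {g | IsGcdOf D g} = {G} := by
    apply Set.eq_singleton_iff_unique_mem.mpr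
    exact ⟨hG, fun g hg => Nat.dvd_antisymm (hG.2 g hg.1) (hg.2 G hG.1)⟩
  rw [hs, csInf_singleton]
  exact hG

/-- If the variety `X : f = g = 0` in `ℙⁿ_k` has an `L`-point for a finite extension `L/k`,
then the hypersurface `W : f + t·g = 0` over `K = k(t)` has an `L(t)`-point; consequently
`I(W/K)` divides `I(X/k)`. -/
theorem point_over_Lt_and_index_dvd (k L : Type u) [Field k] [Field L] [Algebra k L]
    [FiniteDimensional k L] (n d : ℕ)
    (f g : MvPolynomial (Fin (n + 1)) k)
    (hf : f.IsHomogeneous d) (hg : g.IsHomogeneous d)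
    (hpt : ProjHasPointOver k L ({f, g} : Set (MvPolynomial (Fin (n + 1)) k))) :
    (@ProjHasPointOver (RatFunc k) _ (RatFunc L) _ ((ratFuncMap k L).toAlgebra) _
        ({MvPolynomial.map (algebraMap k (RatFunc k)) f +
          MvPolynomial.C RatFunc.X * MvPolynomial.map (algebraMap k (RatFunc k)) g} :
          Set (MvPolynomial (Fin (n + 1)) (RatFunc k)))) ∧
      projIndex (RatFunc k)
        ({MvPolynomial.map (algebraMap k (RatFunc k)) f +
          MvPolynomial.C RatFunc.X * MvPolynomial.map (algebraMap k (RatFunc k)) g} :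
          Set (MvPolynomial (Fin (n + 1)) (RatFunc k))) ∣
        projIndex k ({f, g} : Set (MvPolynomial (Fin (n + 1)) k)) := by
  refine ⟨point_transfer k L f g hpt, ?_⟩
  have hIW : IsGcdOf
      (projDegrees (RatFunc k)
        ({MvPolynomial.map (algebraMap k (RatFunc k)) f +
          MvPolynomial.C RatFunc.X * MvPolynomial.map (algebraMap k (RatFunc k)) g} :
          Set (MvPolynomial (Fin (n + 1)) (RatFunc k))))
      (projIndex (RatFunc k)
        ({MvPolynomial.map (algebraMap k (RatFunc k)) f +
          MvPolynomial.C RatFunc.X * MvPolynomial.map (algebraMap k (RatFunc k)) g} :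
          Set (MvPolynomial (Fin (n + 1)) (RatFunc k)))) := isGcdOf_sInf _
  have hIX : IsGcdOf (projDegrees k ({f, g} : Set (MvPolynomial (Fin (n + 1)) k)))
      (projIndex k ({f, g} : Set (MvPolynomial (Fin (n + 1)) k))) := isGcdOf_sInf _
  exact hIX.2 _ fun m hm => hIW.1 m (degrees_transfer k f g m hm)
end
end

section
/- Let k be a field of characteristic ≠ 2 and q a quadratic form over the rational function field k(t₁, t₂) in n+1 ≥ 2 variables. If the projective quadric q = 0 has a zero-cycle of degree 1 over k(t₁,t₂), then it has a k(t₁,t₂)-rational point. -/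
universe u

noncomputable section

/-- The rational function field `k(t₁,…,t_r)`. -/
abbrev RatFuncField (k : Type u) [Field k] (r : ℕ) : Type u :=
  FractionRing (MvPolynomial (Fin r) k)

noncomputable instance (k : Type u) [Field k] (r : ℕ) : Algebra k (RatFuncField k r) :=
  ((algebraMap (MvPolynomial (Fin r) k) (RatFuncField k r)).comp
    (algebraMap k (MvPolynomial (Fin r) k))).toAlgebra

/-- The transcendental element `tᵢ` of `k(t₁,…,t_r)`. -/
noncomputable def tVar (k : Type u) [Field k] {r : ℕ} (i : Fin r) : RatFuncField k r :=
  algebraMap (MvPolynomial (Fin r) k) (RatFuncField k r) (MvPolynomial.X i)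



open Polynomial

namespace SpringerAux

variable {F : Type u} [Field F]

lemma support_degree_eq' {R : Type*} [CommSemiring R] {N D : ℕ} {q : MvPolynomial (Fin N) R}
    (hq : q.IsHomogeneous D) {σ : Fin N →₀ ℕ} (hσ : σ ∈ q.support) :
    ∑ i ∈ σ.support, σ i = D := by
  have h := hq (MvPolynomial.mem_support_iff.mp hσ)
  simpa [Finsupp.weight_apply, Finsupp.sum] using h

lemma coeff_prod_eq {ι : Type*} (s : Finset ι) (p : ι → F[X]) (e : ι → ℕ)
    (h : ∀ i ∈ s, (p i).natDegree ≤ e i) :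
    (∏ i ∈ s, p i).coeff (∑ i ∈ s, e i) = ∏ i ∈ s, (p i).coeff (e i) := by
  induction s using Finset.cons_induction with
  | empty => simp
  | cons a s ha ih =>
    rw [Finset.prod_cons, Finset.sum_cons,
      Polynomial.coeff_mul_add_eq_of_natDegree_le (h a (Finset.mem_cons_self a s))
        ((Polynomial.natDegree_prod_le _ _).trans
          (Finset.sum_le_sum fun i hi => h i (Finset.mem_cons_of_mem hi))),
      ih fun i hi => h i (Finset.mem_cons_of_mem hi), Finset.prod_cons]

lemma eval₂_expand {N : ℕ} (q : MvPolynomial (Fin N) F) (g : Fin N → F[X]) :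
    MvPolynomial.eval₂ Polynomial.C g q
      = ∑ σ ∈ q.support, Polynomial.C (q.coeff σ) * ∏ i ∈ σ.support, g i ^ σ i := by
  conv_lhs => rw [q.as_sum]
  rw [MvPolynomial.eval₂_sum]
  exact Finset.sum_congr rfl fun σ _ => by rw [MvPolynomial.eval₂_monomial]; rfl

lemma coeff_eval₂ {N D : ℕ} (q : MvPolynomial (Fin N) F) (hq : q.IsHomogeneous D)
    (g : Fin N → F[X]) (m : ℕ) (hg : ∀ i, (g i).natDegree ≤ m) :
    (MvPolynomial.eval₂ Polynomial.C g q).natDegree ≤ D * m ∧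
    (MvPolynomial.eval₂ Polynomial.C g q).coeff (D * m)
      = MvPolynomial.eval (fun i => (g i).coeff m) q := by
  rw [eval₂_expand]
  constructor
  · refine Polynomial.natDegree_sum_le_of_forall_le _ _ fun σ hσ => ?_
    refine (Polynomial.natDegree_C_mul_le _ _).trans ((Polynomial.natDegree_prod_le _ _).trans ?_)
    calc ∑ i ∈ σ.support, (g i ^ σ i).natDegree
        ≤ ∑ i ∈ σ.support, σ i * m :=
          Finset.sum_le_sum fun i _ =>
            (Polynomial.natDegree_pow_le).trans (Nat.mul_le_mul_left _ (hg i))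
      _ = D * m := by rw [← Finset.sum_mul, support_degree_eq' hq hσ]
  · rw [Polynomial.finset_sum_coeff, MvPolynomial.eval_eq]
    refine Finset.sum_congr rfl fun σ hσ => ?_
    rw [Polynomial.coeff_C_mul]
    congr 1
    have hDm : D * m = ∑ i ∈ σ.support, σ i * m := by
      rw [← Finset.sum_mul, support_degree_eq' hq hσ]
    rw [hDm, coeff_prod_eq _ _ _ fun i _ =>
      (Polynomial.natDegree_pow_le).trans (Nat.mul_le_mul_left _ (hg i))]
    exact Finset.prod_congr rfl fun i _ => Polynomial.coeff_pow_of_natDegree_le (hg i)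

lemma eval_smul_of_isHomogeneous {L : Type*} [CommSemiring L] {N D : ℕ}
    (Q : MvPolynomial (Fin N) L) (hQ : Q.IsHomogeneous D) (γ : L) (u : Fin N → L) :
    MvPolynomial.eval (fun i => γ * u i) Q = γ ^ D * MvPolynomial.eval u Q := by
  rw [MvPolynomial.eval_eq, MvPolynomial.eval_eq, Finset.mul_sum]
  refine Finset.sum_congr rfl fun σ hσ => ?_
  simp_rw [mul_pow, Finset.prod_mul_distrib, Finset.prod_pow_eq_pow_sum]
  rw [support_degree_eq' hQ hσ]
  ring

lemma exists_odd_irreducible_factor_aux :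
    ∀ d : ℕ, ∀ h : F[X], h.natDegree = d → h ≠ 0 → Odd h.natDegree →
      ∃ r : F[X], Irreducible r ∧ r ∣ h ∧ Odd r.natDegree := by
  intro d
  induction d using Nat.strong_induction_on with
  | _ d ih =>
  intro h hd h0 hodd
  subst hd
  by_cases hirr : Irreducible h
  · exact ⟨h, hirr, dvd_refl h, hodd⟩
  · have hnu : ¬IsUnit h := by
      intro hu
      rw [Polynomial.natDegree_eq_zero_of_isUnit hu] at hodd
      simp [Nat.odd_iff] at hodd
    rw [irreducible_iff] at hirr
    push_neg at hirr
    obtain ⟨a, b, hab, hua, hub⟩ := hirr hnu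
    have ha0 : a ≠ 0 := fun h' => h0 (by simp [hab, h'])
    have hb0 : b ≠ 0 := fun h' => h0 (by simp [hab, h'])
    have hdeg : h.natDegree = a.natDegree + b.natDegree := by
      rw [hab, Polynomial.natDegree_mul ha0 hb0]
    have ha1 : 1 ≤ a.natDegree := by
      rcases Nat.eq_zero_or_pos a.natDegree with h' | h'
      · exact absurd (Polynomial.isUnit_iff_degree_eq_zero.mpr
          (by rw [Polynomial.degree_eq_natDegree ha0, h']; rfl)) hua
      · exact h'
    have hb1 : 1 ≤ b.natDegree := by
      rcases Nat.eq_zero_or_pos b.natDegree with h' | h'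
      · exact absurd (Polynomial.isUnit_iff_degree_eq_zero.mpr
          (by rw [Polynomial.degree_eq_natDegree hb0, h']; rfl)) hub
      · exact h'
    have hpar : Odd a.natDegree ∨ Odd b.natDegree := by
      rw [Nat.odd_iff] at hodd ⊢; rw [Nat.odd_iff]; omega
    rcases hpar with hpa | hpb
    · obtain ⟨r, hr, hrd, hro⟩ := ih a.natDegree (by omega) a rfl ha0 hpa
      exact ⟨r, hr, hrd.trans ⟨b, hab⟩, hro⟩
    · obtain ⟨r, hr, hrd, hro⟩ := ih b.natDegree (by omega) b rfl hb0 hpb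
      exact ⟨r, hr, hrd.trans ⟨a, by rw [hab, mul_comm]⟩, hro⟩

lemma exists_odd_irreducible_factor (h : F[X]) (h0 : h ≠ 0) (hodd : Odd h.natDegree) :
    ∃ r : F[X], Irreducible r ∧ r ∣ h ∧ Odd r.natDegree :=
  exists_odd_irreducible_factor_aux h.natDegree h rfl h0 hodd

end SpringerAux

namespace SpringerAux

open Polynomial

lemma springer_core {F L : Type u} [Field F] [Field L] [Algebra F L] {n : ℕ}
    (q : MvPolynomial (Fin (n + 1)) F) (hq : q.IsHomogeneous 2)
    (haniso : ∀ y : Fin (n + 1) → F, MvPolynomial.eval y q = 0 → y = 0)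
    (t : L) (hint : IsIntegral F t)
    (hsurj : ∀ z : L, ∃ g : F[X], Polynomial.aeval t g = z)
    (hodd : Odd (minpoly F t).natDegree)
    (x : Fin (n + 1) → L) (hx : x ≠ 0)
    (hiso : MvPolynomial.eval x (MvPolynomial.map (algebraMap F L) q) = 0) :
    ∃ (L' : Type u) (_ : Field L') (_ : Algebra F L'), FiniteDimensional F L' ∧
      Odd (Module.finrank F L') ∧ Module.finrank F L' < (minpoly F t).natDegree ∧
      ∃ w : Fin (n + 1) → L', w ≠ 0 ∧
        MvPolynomial.eval w (MvPolynomial.map (algebraMap F L') q) = 0 := by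
  classical
  set f := minpoly F t with hf
  have hfmonic : f.Monic := minpoly.monic hint
  have hfpos : 0 < f.natDegree := minpoly.natDegree_pos hint
  choose g₀ hg₀ using fun i => hsurj (x i)
  set g₁ : Fin (n + 1) → F[X] := fun i => g₀ i %ₘ f with hg₁def
  have haev₁ : ∀ i, Polynomial.aeval t (g₁ i) = x i := by
    intro i
    rw [← hg₀ i]
    conv_rhs => rw [← Polynomial.modByMonic_add_div (g₀ i) f]
    rw [map_add, map_mul, minpoly.aeval, zero_mul, add_zero]
  have hdeg₁ : ∀ i, (g₁ i).natDegree < f.natDegree :=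
    fun i => Polynomial.natDegree_modByMonic_lt _ hfmonic
      (fun h1 => by simp [h1] at hfpos)
  obtain ⟨j₀, hj₀⟩ : ∃ j, x j ≠ 0 := by
    by_contra hcon; push_neg at hcon; exact hx (funext hcon)
  have hg₁j₀ : g₁ j₀ ≠ 0 := fun h => hj₀ (by rw [← haev₁ j₀, h, map_zero])
  set G : F[X] := Finset.univ.gcd g₁ with hGdef
  have hG0 : G ≠ 0 := fun h => hg₁j₀ (Finset.gcd_eq_zero_iff.mp h j₀ (Finset.mem_univ _))
  set g : Fin (n + 1) → F[X] := fun i => g₁ i / G with hgdef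
  have hfact : ∀ i, g₁ i = G * g i := fun i =>
    (EuclideanDomain.mul_div_cancel' hG0 (Finset.gcd_dvd (Finset.mem_univ i))).symm
  have hdeg : ∀ i, (g i).natDegree < f.natDegree := by
    intro i
    rcases eq_or_ne (g i) 0 with h | h
    · simpa [h] using hfpos
    · have h2 := hdeg₁ i
      rw [hfact i, Polynomial.natDegree_mul hG0 h] at h2
      omega
  have hnocomm : ∀ r : F[X], ¬IsUnit r → (∀ i, r ∣ g i) → False := by
    intro r hru hr
    have h1 : G * r ∣ G := Finset.dvd_gcd fun i _ => by
      rw [hfact i]; exact mul_dvd_mul_left G (hr i)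
    have h2 : r ∣ 1 := (mul_dvd_mul_iff_left hG0).mp (by simpa using h1)
    exact hru (isUnit_of_dvd_one h2)
  set u : Fin (n + 1) → L := fun i => Polynomial.aeval t (g i) with hudef
  set γ : L := Polynomial.aeval t G with hγdef
  have hxu : ∀ i, x i = γ * u i := by
    intro i; rw [← haev₁ i, hfact i, map_mul]
  have hγ : γ ≠ 0 := by
    intro h
    have hdvd : f ∣ G := minpoly.dvd F t h
    have h1 := Polynomial.natDegree_le_of_dvd hdvd hG0
    have h2 := Polynomial.natDegree_le_of_dvd
      (show G ∣ g₁ j₀ from Finset.gcd_dvd (Finset.mem_univ j₀)) hg₁j₀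
    have h3 := hdeg₁ j₀
    omega
  have hu0 : MvPolynomial.eval u (MvPolynomial.map (algebraMap F L) q) = 0 := by
    have hmap : (MvPolynomial.map (algebraMap F L) q).IsHomogeneous 2 := hq.map _
    have hsm := eval_smul_of_isHomogeneous _ hmap γ u
    have hx' : x = fun i => γ * u i := funext hxu
    rw [hx', hsm] at hiso
    rcases mul_eq_zero.mp hiso with h | h
    · exact absurd h (pow_ne_zero _ hγ)
    · exact h
  set P : F[X] := MvPolynomial.eval₂ Polynomial.C g q with hPdef
  have halgL : ((Polynomial.aeval t : F[X] →ₐ[F] L) : F[X] →+* L).comp Polynomial.C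
      = algebraMap F L := by
    ext a; simp
  have hPt : Polynomial.aeval t P = 0 := by
    have hcomp := MvPolynomial.eval₂_comp_left
      ((Polynomial.aeval t : F[X] →ₐ[F] L) : F[X] →+* L) Polynomial.C g q
    rw [halgL] at hcomp
    have : (fun i => ((Polynomial.aeval t : F[X] →ₐ[F] L) : F[X] →+* L) (g i)) = u := rfl
    rw [hPdef]
    calc (Polynomial.aeval t) (MvPolynomial.eval₂ Polynomial.C g q)
        = MvPolynomial.eval₂ (algebraMap F L) u q := hcomp
      _ = MvPolynomial.eval u (MvPolynomial.map (algebraMap F L) q) :=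
          (MvPolynomial.eval_map _ _ _).symm
      _ = 0 := hu0
  obtain ⟨h, hPfh⟩ : f ∣ P := minpoly.dvd F t hPt
  set m : ℕ := Finset.univ.sup (fun i => (g i).natDegree) with hmdef
  have hgm : ∀ i, (g i).natDegree ≤ m := fun i => by
    rw [hmdef]; exact Finset.le_sup (f := fun i => (g i).natDegree) (Finset.mem_univ i)
  set v : Fin (n + 1) → F := fun i => (g i).coeff m with hvdef
  have hgj₀ : g j₀ ≠ 0 := by
    intro h'
    exact hj₀ (by rw [hxu j₀, hudef]; simp [h'])
  have hvne : v ≠ 0 := by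
    intro hv0
    obtain ⟨j, -, hj⟩ := Finset.exists_mem_eq_sup (Finset.univ : Finset (Fin (n + 1)))
      ⟨j₀, Finset.mem_univ _⟩ (fun i => (g i).natDegree)
    rcases eq_or_ne (g j) 0 with h' | h'
    · have hm0 : m = 0 := by rw [hmdef, hj, h', Polynomial.natDegree_zero]
      have hd0 : (g j₀).natDegree = 0 := le_antisymm (hm0 ▸ hgm j₀) (Nat.zero_le _)
      have hc : (g j₀).coeff 0 = 0 := by
        have := congrFun hv0 j₀
        simpa [hvdef, hm0] using this
      exact hgj₀ (by
        rw [Polynomial.eq_C_of_natDegree_eq_zero hd0, hc, map_zero])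
    · have hvj : v j ≠ 0 := by
        show (g j).coeff m ≠ 0
        rw [hmdef, hj]
        exact Polynomial.leadingCoeff_ne_zero.mpr h'
      exact hvj (congrFun hv0 j)
  have hqv : MvPolynomial.eval v q ≠ 0 := fun h' => hvne (haniso v h')
  obtain ⟨hPdeg, hPcoeff⟩ := coeff_eval₂ q hq g m hgm
  have hPcoeff' : P.coeff (2 * m) = MvPolynomial.eval v q := hPcoeff
  have hP0 : P ≠ 0 := fun h' => hqv (by rw [← hPcoeff', h', Polynomial.coeff_zero])
  have hPdeg' : P.natDegree = 2 * m :=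
    le_antisymm hPdeg (Polynomial.le_natDegree_of_ne_zero (by rw [hPcoeff']; exact hqv))
  have hh0 : h ≠ 0 := fun h' => hP0 (by rw [hPfh, h', mul_zero])
  have hhdeg : f.natDegree + h.natDegree = 2 * m := by
    rw [← hPdeg', hPfh, Polynomial.natDegree_mul hfmonic.ne_zero hh0]
  have hhodd : Odd h.natDegree := by
    rw [Nat.odd_iff] at hodd ⊢
    omega
  obtain ⟨r, hrirr, hrh, hrodd⟩ := exists_odd_irreducible_factor h hh0 hhodd
  have hrdeg : r.natDegree ≤ h.natDegree := Polynomial.natDegree_le_of_dvd hrh hh0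
  have hmf : m < f.natDegree :=
    (Finset.sup_lt_iff (show (⊥ : ℕ) < f.natDegree from hfpos)).mpr fun i _ => hdeg i
  have hrlt : r.natDegree < f.natDegree := by omega
  haveI : Fact (Irreducible r) := ⟨hrirr⟩
  have hr0 : r ≠ 0 := hrirr.ne_zero
  haveI : FiniteDimensional F (AdjoinRoot r) := (AdjoinRoot.powerBasis hr0).finite
  have hfinrank : Module.finrank F (AdjoinRoot r) = r.natDegree :=
    (AdjoinRoot.powerBasis hr0).finrank
  refine ⟨AdjoinRoot r, inferInstance, inferInstance, inferInstance, ?_, ?_, ?_⟩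
  · rw [hfinrank]; exact hrodd
  · rw [hfinrank]; exact hrlt
  · refine ⟨fun i => AdjoinRoot.mk r (g i), ?_, ?_⟩
    · intro hw0
      exact hnocomm r hrirr.not_isUnit fun i =>
        AdjoinRoot.mk_eq_zero.mp (congrFun hw0 i)
    · rw [MvPolynomial.eval_map]
      have hcomp := MvPolynomial.eval₂_comp_left (AdjoinRoot.mk r) Polynomial.C g q
      have halg : (AdjoinRoot.mk r).comp Polynomial.C = algebraMap F (AdjoinRoot r) := by
        rw [AdjoinRoot.algebraMap_eq]; rfl
      rw [halg] at hcomp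
      have hmk0 : AdjoinRoot.mk r P = 0 :=
        AdjoinRoot.mk_eq_zero.mpr (hPfh ▸ Dvd.dvd.mul_left hrh f)
      show MvPolynomial.eval₂ (algebraMap F (AdjoinRoot r)) (⇑(AdjoinRoot.mk r) ∘ g) q = 0
      rw [← hcomp]
      exact hmk0

end SpringerAux

namespace SpringerAux

lemma springer_master :
    ∀ (d : ℕ) (F : Type u) [Field F], ∀ {n : ℕ} (q : MvPolynomial (Fin (n + 1)) F),
      q.IsHomogeneous 2 →
      (∀ y : Fin (n + 1) → F, MvPolynomial.eval y q = 0 → y = 0) →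
      ∀ (L : Type u) [Field L] [Algebra F L] [FiniteDimensional F L],
        Odd (Module.finrank F L) → Module.finrank F L ≤ d →
        ∀ x : Fin (n + 1) → L,
          MvPolynomial.eval x (MvPolynomial.map (algebraMap F L) q) = 0 → x = 0 := by
  intro d
  induction d using Nat.strong_induction_on with
  | _ d ih =>
  intro F _ n q hq haniso L _ _ _ hodd hle x hiso
  by_cases hall : ∀ i, ∃ y, algebraMap F L y = x i
  · choose y hy using hall
    have hyx : x = fun i => algebraMap F L (y i) := funext fun i => (hy i).symm
    have h0 : MvPolynomial.eval y q = 0 := by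
      apply (algebraMap F L).injective
      rw [map_zero]
      have hc := MvPolynomial.eval₂_comp_left (algebraMap F L) (RingHom.id F) y q
      rw [RingHom.comp_id] at hc
      have hid : MvPolynomial.eval₂ (RingHom.id F) y q = MvPolynomial.eval y q := rfl
      rw [hid] at hc
      calc algebraMap F L (MvPolynomial.eval y q)
          = MvPolynomial.eval₂ (algebraMap F L) (⇑(algebraMap F L) ∘ y) q := hc
        _ = MvPolynomial.eval x (MvPolynomial.map (algebraMap F L) q) := by
            rw [MvPolynomial.eval_map, hyx]; rfl
        _ = 0 := hiso
    rw [hyx, haniso y h0]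
    funext i; simp
  · push_neg at hall
    obtain ⟨i₀, hi₀⟩ := hall
    set θ := x i₀ with hθ
    have hint : IsIntegral F θ := IsIntegral.of_finite F θ
    have hd2 : 2 ≤ (minpoly F θ).natDegree := by
      rw [minpoly.two_le_natDegree_iff hint]
      rintro ⟨y, hy⟩; exact hi₀ y hy
    by_cases htop : IntermediateField.adjoin F {θ} = ⊤
    · -- L is simple over F, generated by θ
      have hsurj : ∀ z : L, ∃ g : Polynomial F, Polynomial.aeval θ g = z := by
        intro z
        have hz : z ∈ IntermediateField.adjoin F {θ} := htop ▸ trivial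
        have hz2 : z ∈ Algebra.adjoin F {θ} := by
          rw [← IntermediateField.adjoin_simple_toSubalgebra_of_isAlgebraic hint.isAlgebraic] at *
          exact hz
        rw [Algebra.adjoin_singleton_eq_range_aeval] at hz2
        obtain ⟨g, hg⟩ := hz2
        exact ⟨g, hg⟩
      have hfr : (minpoly F θ).natDegree = Module.finrank F L := by
        rw [← IntermediateField.adjoin.finrank hint, htop,
          IntermediateField.finrank_top']
      by_contra hx
      obtain ⟨L', _, _, _, hodd', hlt', w, hw, hwiso⟩ :=
        springer_core q hq haniso θ hint hsurj (by rw [hfr]; exact hodd) x hx hiso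
      exact hw (ih (Module.finrank F L') (by omega) F q hq haniso L' hodd' le_rfl w hwiso)
    · set M := IntermediateField.adjoin F {θ} with hM
      have hmul : Module.finrank F M * Module.finrank M L = Module.finrank F L :=
        Module.finrank_mul_finrank F M L
      have hposM : 0 < Module.finrank F M := Module.finrank_pos
      have hposL : 0 < Module.finrank M L := Module.finrank_pos
      have hM1 : 1 < Module.finrank F M := by
        rcases Nat.lt_or_ge 1 (Module.finrank F M) with h | h
        · exact h
        · exfalso
          have h1 : Module.finrank F M = 1 := by omega
          rw [IntermediateField.finrank_eq_one_iff] at h1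
          have hθM : θ ∈ M := IntermediateField.mem_adjoin_simple_self F θ
          rw [h1, IntermediateField.mem_bot] at hθM
          obtain ⟨y, hy⟩ := hθM
          exact hi₀ y hy
      have hM2 : 1 < Module.finrank M L := by
        rcases Nat.lt_or_ge 1 (Module.finrank M L) with h | h
        · exact h
        · exfalso
          apply htop
          have h1 : Module.finrank M L = 1 := by omega
          have hbt : (⊥ : Subalgebra M L) = ⊤ :=
            Subalgebra.bot_eq_top_of_finrank_eq_one h1
          have hmem : ∀ z : L, z ∈ M := by
            intro z
            have hz : z ∈ (⊥ : Subalgebra M L) := by rw [hbt]; trivial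
            rw [Algebra.mem_bot] at hz
            obtain ⟨w, hw⟩ := hz
            rw [← hw]
            exact w.2
          exact SetLike.ext fun z => ⟨fun _ => trivial, fun _ => hmem z⟩
      have hoddmul : Odd (Module.finrank F M * Module.finrank M L) := by
        rw [hmul]; exact hodd
      have hoddM : Odd (Module.finrank F M) := (Nat.odd_mul.mp hoddmul).1
      have hoddL : Odd (Module.finrank M L) := (Nat.odd_mul.mp hoddmul).2
      have hltM : Module.finrank F M < d := by nlinarith
      have hltL : Module.finrank M L < d := by nlinarith
      have hqMhom : (MvPolynomial.map (algebraMap F M) q).IsHomogeneous 2 := hq.map _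
      have hanisoM : ∀ y : Fin (n + 1) → M,
          MvPolynomial.eval y (MvPolynomial.map (algebraMap F M) q) = 0 → y = 0 :=
        fun y hy => ih (Module.finrank F M) hltM F q hq haniso M hoddM le_rfl y hy
      refine ih (Module.finrank M L) hltL M (MvPolynomial.map (algebraMap F M) q)
        hqMhom hanisoM L hoddL le_rfl x ?_
      rw [MvPolynomial.map_map, ← IsScalarTower.algebraMap_eq F M L]
      exact hiso

end SpringerAux


/-- **Springer's theorem over `k(t₁,t₂)`.**  Let `k` be a field of characteristic `≠ 2` and `q`
a quadratic form in `n+1 ≥ 2` variables over `F = k(t₁,t₂)`.  If the projective quadric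
`q = 0` has a zero-cycle of degree 1 over `F`, then it has an `F`-rational point. -/
theorem springer_quadric_over_ratFunc (k : Type u) [Field k] (hchar : ringChar k ≠ 2)
    (n : ℕ) (hn : 2 ≤ n + 1)
    (q : MvPolynomial (Fin (n + 1)) (RatFuncField k 2))
    (hq : q.IsHomogeneous 2)
    (hcycle : HasZeroCycleDegOne (RatFuncField k 2)
      ({q} : Set (MvPolynomial (Fin (n + 1)) (RatFuncField k 2)))) :
    ProjHasPointOver (RatFuncField k 2) (RatFuncField k 2)
      ({q} : Set (MvPolynomial (Fin (n + 1)) (RatFuncField k 2))) := by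
  classical
  obtain ⟨m, dg, c, hdg, hsum⟩ := hcycle
  have hoddex : ∃ i, Odd (dg i) := by
    by_contra hcon
    push_neg at hcon
    simp only [Nat.not_odd_iff_even] at hcon
    have h2 : (2 : ℤ) ∣ ∑ i, c i * (dg i : ℤ) :=
      Finset.dvd_sum fun i _ => Dvd.dvd.mul_left
        (((Int.even_coe_nat (dg i)).mpr (hcon i)).two_dvd) (c i)
    rw [hsum] at h2
    norm_num at h2
  obtain ⟨i, hoddi⟩ := hoddex
  obtain ⟨L, _, _, hfd, hfr, hpt⟩ := hdg i
  obtain ⟨x, hx0, hxev⟩ := hpt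
  have hxq := hxev q rfl
  by_contra hnopt
  have haniso : ∀ y : Fin (n + 1) → RatFuncField k 2,
      MvPolynomial.eval y q = 0 → y = 0 := by
    intro y hy
    by_contra hy0
    apply hnopt
    refine ⟨y, hy0, ?_⟩
    intro f hf
    rw [Set.mem_singleton_iff] at hf
    subst hf
    have hid : algebraMap (RatFuncField k 2) (RatFuncField k 2) = RingHom.id _ :=
      Algebra.algebraMap_self
    rw [hid, MvPolynomial.map_id]
    exact hy
  exact hx0 (SpringerAux.springer_master (Module.finrank (RatFuncField k 2) L)
    (RatFuncField k 2) q hq haniso L (by rw [hfr]; exact hoddi) le_rfl x hxq)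
end
end
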